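/- Let X be an abelian variety over ℂ and F a subfield of End(X)⊗ℚ. If F admits an embedding into ℝ (has a real prime), then [F:ℚ] divides dim X. -/

import Mathlib

open Module

open Polynomial

lemma det_smul_eq_norm_pow (F : Type*) [Field F] [Algebra ℚ F] [FiniteDimensional ℚ F]
    (V : Type*) [AddCommGroup V] [Module ℚ V] [FiniteDimensional ℚ V]
    [Module F V] [IsScalarTower ℚ F V] [SMulCommClass F ℚ V] (α : F) :
    LinearMap.det (DistribMulAction.toLinearMap ℚ V α)
      = Algebra.norm ℚ α ^ finrank F V := by
  haveI : FiniteDimensional F V := FiniteDimensional.right ℚ F V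
  let b := finBasis ℚ F
  let c := finBasis F V
  rw [← LinearMap.det_toMatrix (b.smulTower c), Algebra.norm_eq_matrix_det b]
  have h : LinearMap.toMatrix (b.smulTower c) (b.smulTower c)
      (DistribMulAction.toLinearMap ℚ V α)
      = Matrix.blockDiagonal fun _ : Fin (finrank F V) => Algebra.leftMulMatrix b α := by
    ext ⟨i, j⟩ ⟨i', j'⟩
    rw [LinearMap.toMatrix_apply, Basis.smulTower_apply]
    change ((b.smulTower c).repr (α • (b i' • c j'))) (i, j) = _
    rw [smul_smul, Basis.smulTower_repr]
    rcases eq_or_ne j j' with rfl | hj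
    · simp [Matrix.blockDiagonal_apply, Algebra.leftMulMatrix_eq_repr_mul]
    · simp [Matrix.blockDiagonal_apply, hj, Finsupp.single_apply, Ne.symm hj]
  rw [h, Matrix.det_blockDiagonal, Finset.prod_const, Finset.card_univ, Fintype.card_fin]

lemma norm_sub_ratCast (F : Type*) [Field F] [Algebra ℚ F] [FiniteDimensional ℚ F]
    (pb : PowerBasis ℚ F) (q : ℚ) :
    Algebra.norm ℚ (pb.gen - algebraMap ℚ F q)
      = (-1) ^ (finrank ℚ F) * (minpoly ℚ pb.gen).eval q := by
  set θ := pb.gen with hθdef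
  have hθ : IsIntegral ℚ θ := pb.isIntegral_gen
  have hx : IsIntegral ℚ (θ - algebraMap ℚ F q) := hθ.sub isIntegral_algebraMap
  have hmem : θ ∈ Algebra.adjoin ℚ ({θ - algebraMap ℚ F q} : Set F) := by
    have h1 : θ - algebraMap ℚ F q ∈ Algebra.adjoin ℚ ({θ - algebraMap ℚ F q} : Set F) :=
      Algebra.subset_adjoin rfl
    have h2 := Subalgebra.algebraMap_mem (Algebra.adjoin ℚ ({θ - algebraMap ℚ F q} : Set F)) q
    simpa using add_mem h1 h2
  set pb' := PowerBasis.ofAdjoinEqTop hx (eq_top_iff.mpr (pb.adjoin_gen_eq_top ▸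
    Algebra.adjoin_le (Set.singleton_subset_iff.mpr hmem))) with hpb'
  have hgen : pb'.gen = θ - algebraMap ℚ F q := by
    simp [hpb', PowerBasis.ofAdjoinEqTop_gen]
  have hmin : minpoly ℚ pb'.gen = (minpoly ℚ θ).comp (X + C q) := by
    rw [hgen, minpoly.sub_algebraMap]
  have hdim : pb'.dim = finrank ℚ F := (pb'.finrank).symm
  calc Algebra.norm ℚ (θ - algebraMap ℚ F q)
      = Algebra.norm ℚ pb'.gen := by rw [hgen]
    _ = (-1) ^ pb'.dim * (minpoly ℚ pb'.gen).coeff 0 :=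
        Algebra.PowerBasis.norm_gen_eq_coeff_zero_minpoly pb'
    _ = (-1) ^ (finrank ℚ F) * (minpoly ℚ θ).eval q := by
        rw [hdim, hmin, coeff_zero_eq_eval_zero, eval_comp, eval_add, eval_X, eval_C, zero_add]

lemma exists_norm_neg (F : Type*) [Field F] [Algebra ℚ F] [FiniteDimensional ℚ F]
    (σ : F →+* ℝ) : ∃ α : F, Algebra.norm ℚ α < 0 := by
  classical
  let pb := Field.powerBasisOfFiniteOfSeparable ℚ F
  set θ := pb.gen with hθdef
  set p := minpoly ℚ θ with hpdef
  set P : Polynomial ℝ := p.map (algebraMap ℚ ℝ) with hPdef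
  set t := σ θ with htdef
  have hcomp : (σ.comp (algebraMap ℚ F)) = algebraMap ℚ ℝ := Subsingleton.elim _ _
  have hPt : P.eval t = 0 := by
    have h0 : p.eval₂ (algebraMap ℚ F) θ = 0 := by
      simpa [aeval_def] using minpoly.aeval ℚ θ
    have h1 := hom_eval₂ (p := p) (f := algebraMap ℚ F) (g := σ) θ
    rw [h0, map_zero, hcomp] at h1
    rw [hPdef, eval_map]
    exact h1.symm
  have hsep : p.Separable := Algebra.IsSeparable.isSeparable ℚ θ
  have hPsep : P.Separable := hsep.map
  obtain ⟨a, b, hab⟩ := hPsep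
  have hc : P.derivative.eval t ≠ 0 := by
    intro h
    have h2 := congrArg (Polynomial.eval t) hab
    simp [hPt, h] at h2
  set c := P.derivative.eval t with hcdef
  have hd : HasDerivAt (fun x : ℝ => P.eval x) c t := P.hasDerivAt t
  rw [hasDerivAt_iff_tendsto_slope] at hd
  have hball : ∀ᶠ x in nhdsWithin t {t}ᶜ,
      slope (fun x : ℝ => P.eval x) t x ∈ Metric.ball c |c| :=
    hd (Metric.ball_mem_nhds c (abs_pos.mpr hc))
  rw [eventually_nhdsWithin_iff, Metric.eventually_nhds_iff] at hball
  obtain ⟨δ, hδ, hb⟩ := hball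
  obtain ⟨q₁, hq₁, hq₁'⟩ := exists_rat_btwn (show t - δ < t by linarith)
  obtain ⟨q₂, hq₂, hq₂'⟩ := exists_rat_btwn (show t < t + δ by linarith)
  have hm1 : dist (q₁ : ℝ) t < δ := by
    rw [Real.dist_eq, abs_lt]; constructor <;> linarith
  have hm2 : dist (q₂ : ℝ) t < δ := by
    rw [Real.dist_eq, abs_lt]; constructor <;> linarith
  have hne1 : (q₁ : ℝ) ≠ t := ne_of_lt hq₁'
  have hne2 : (q₂ : ℝ) ≠ t := ne_of_gt hq₂
  have hs₁ := hb hm1 hne1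
  have hs₂ := hb hm2 hne2
  rw [Metric.mem_ball, Real.dist_eq] at hs₁ hs₂
  set s₁ := slope (fun x : ℝ => P.eval x) t (q₁ : ℝ) with hs1def
  set s₂ := slope (fun x : ℝ => P.eval x) t (q₂ : ℝ) with hs2def
  have sign_lemma : ∀ s : ℝ, |s - c| < |c| → 0 < s * c := by
    intro s h
    rw [abs_lt] at h
    rcases abs_cases c with ⟨he, _⟩ | ⟨he, _⟩ <;> nlinarith [h.1, h.2]
  have hsc₁ := sign_lemma _ hs₁
  have hsc₂ := sign_lemma _ hs₂
  have hss : 0 < s₁ * s₂ := by nlinarith [mul_pos hsc₁ hsc₂, sq_nonneg c, sq_nonneg (s₁*s₂)]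
  have hu1 : P.eval (q₁ : ℝ) = s₁ * ((q₁ : ℝ) - t) := by
    rw [hs1def, slope_def_field, hPt, sub_zero]
    field_simp [sub_ne_zero.mpr hne1]
  have hu2 : P.eval (q₂ : ℝ) = s₂ * ((q₂ : ℝ) - t) := by
    rw [hs2def, slope_def_field, hPt, sub_zero]
    field_simp [sub_ne_zero.mpr hne2]
  have hprod : P.eval (q₁ : ℝ) * P.eval (q₂ : ℝ) < 0 := by
    rw [hu1, hu2]
    nlinarith [mul_neg_of_pos_of_neg hss (mul_neg_of_neg_of_pos
      (show (q₁ : ℝ) - t < 0 by linarith) (show (0:ℝ) < (q₂ : ℝ) - t by linarith))]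
  have hcast : ∀ q : ℚ, P.eval (q : ℝ) = ((p.eval q : ℚ) : ℝ) := by
    intro q
    rw [hPdef, eval_map, show ((q : ℝ)) = algebraMap ℚ ℝ q from (eq_ratCast _ q).symm,
      eval₂_at_apply, eq_ratCast]
  rw [hcast q₁, hcast q₂] at hprod
  have hprodℚ : p.eval q₁ * p.eval q₂ < 0 := by exact_mod_cast hprod
  have hn1 := norm_sub_ratCast F pb q₁
  have hn2 := norm_sub_ratCast F pb q₂
  rw [← hθdef, ← hpdef] at hn1 hn2
  have hee : ((-1 : ℚ) ^ finrank ℚ F) * ((-1 : ℚ) ^ finrank ℚ F) = 1 := by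
    rw [← pow_add]
    exact Even.neg_one_pow ⟨finrank ℚ F, rfl⟩
  have hnn : Algebra.norm ℚ (θ - algebraMap ℚ F q₁) *
      Algebra.norm ℚ (θ - algebraMap ℚ F q₂) < 0 := by
    rw [hn1, hn2]
    calc ((-1 : ℚ) ^ finrank ℚ F * p.eval q₁) * ((-1 : ℚ) ^ finrank ℚ F * p.eval q₂)
        = (((-1 : ℚ) ^ finrank ℚ F) * ((-1 : ℚ) ^ finrank ℚ F)) * (p.eval q₁ * p.eval q₂) := by
          ring
      _ = p.eval q₁ * p.eval q₂ := by rw [hee, one_mul]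
      _ < 0 := hprodℚ
  rcases mul_neg_iff.mp hnn with ⟨_, h2⟩ | ⟨h1, _⟩
  · exact ⟨_, h2⟩
  · exact ⟨_, h1⟩

/-- **Real primes of endomorphism fields divide the dimension.**  Let `X` be an abelian
variety over `ℂ` of dimension `g` and `F` a subfield of `End(X) ⊗ ℚ`.  We model this by the
faithful action of the number field `F` on the homology `V = H₁(X, ℚ)`, a `ℚ`-vector space of
dimension `2g`, together with the positivity of degrees: for every `α ∈ F ⊆ End(X) ⊗ ℚ` the
determinant of `α` acting `ℚ`-linearly on `V` equals `deg α ≥ 0` (up to the square scaling of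
quasi-isogenies).  If `F` admits an embedding into `ℝ` (has a real prime), then `[F : ℚ]`
divides `g = dim X`. -/
theorem degree_dvd_dim_of_real_prime
    (F : Type*) [Field F] [Algebra ℚ F] [FiniteDimensional ℚ F]
    (g : ℕ) (V : Type*) [AddCommGroup V] [Module ℚ V] [FiniteDimensional ℚ V]
    [Module F V] [IsScalarTower ℚ F V] [SMulCommClass F ℚ V] [FaithfulSMul F V]
    (hdim : finrank ℚ V = 2 * g)
    (hdet : ∀ α : F, 0 ≤ LinearMap.det (DistribMulAction.toLinearMap ℚ V α))
    (hreal : Nonempty (F →+* ℝ)) :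
    finrank ℚ F ∣ g := by
  haveI : FiniteDimensional F V := FiniteDimensional.right ℚ F V
  obtain ⟨σ⟩ := hreal
  by_contra hndvd
  have hmul : finrank ℚ F * finrank F V = 2 * g := by
    rw [finrank_mul_finrank ℚ F V, hdim]
  have hodd : Odd (finrank F V) := by
    rcases Nat.even_or_odd (finrank F V) with ⟨k, hk⟩ | h
    · exfalso
      apply hndvd
      refine ⟨k, ?_⟩
      have h2 : 2 * (finrank ℚ F * k) = 2 * g := by rw [← hmul, hk]; ring
      exact (Nat.eq_of_mul_eq_mul_left (by norm_num) h2).symm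
    · exact h
  obtain ⟨α, hα⟩ := exists_norm_neg F σ
  have hd := hdet α
  rw [det_smul_eq_norm_pow F V α] at hd
  exact absurd hd (not_le.mpr (Odd.pow_neg hodd hα))
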